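/- arXiv:1211.7158 — 2 statements merged into one kernel-verified Lean document; each statement's English description precedes it below -/
import Mathlib

section
/- Let η = (η₁, η₂, η₃) ∈ ℤ³ with η₁, η₂, η₃ > 0, ε > 0, and let B = (0, εη₁) × (0, εη₂) × (0, εη₃) be the bond volume with main diagonal from the origin to εη. Suppose v : closure(B) → ℝ is continuous and piecewise linear with respect to a type A decomposition of B into six tetrahedra (the decomposition of the box into six tetrahedra whose edges include the main diagonal (0, εη), the three face diagonals emanating from 0, the three face diagonals emanating from εη, and the edges of B). Then ∫_B ∇v(x)·η dx = ε² η₁η₂η₃ (v(εη) − v(0)). -/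
open MeasureTheory
open scoped RealInnerProductSpace

noncomputable section

/-- ℝ³ as a Euclidean space. -/
abbrev E3 := EuclideanSpace ℝ (Fin 3)

/-- Build a point of `E3` from a plain function. -/
def ev (f : Fin 3 → ℝ) : E3 := WithLp.toLp 2 f

/-- The open axis-aligned box `(0,b₁) × (0,b₂) × (0,b₃)`. -/
def openBox (b : Fin 3 → ℝ) : Set E3 := {x | ∀ i, x i ∈ Set.Ioo 0 (b i)}

/-- The (closed) tetrahedron of the type A (Kuhn) decomposition of the box with side
lengths `b` associated to the permutation `σ`:  the points whose scaled coordinates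
`x i / b i` are ordered according to `σ`.  The six tetrahedra obtained in this way have
as edges exactly the main diagonal from `0` to `(b₁,b₂,b₃)`, the three face diagonals
emanating from `0`, the three face diagonals emanating from `(b₁,b₂,b₃)` and the edges
of the box. -/
def kuhnTet (b : Fin 3 → ℝ) (σ : Equiv.Perm (Fin 3)) : Set E3 :=
  {x | 0 ≤ x (σ 0) / b (σ 0) ∧ x (σ 0) / b (σ 0) ≤ x (σ 1) / b (σ 1) ∧
       x (σ 1) / b (σ 1) ≤ x (σ 2) / b (σ 2) ∧ x (σ 2) / b (σ 2) ≤ 1}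

lemma openBox_isOpen (b : Fin 3 → ℝ) : IsOpen (openBox b) := by
  have h : openBox b = ⋂ i, (fun x : E3 => x i) ⁻¹' Set.Ioo 0 (b i) := by
    ext x; simp [openBox]
  rw [h]
  exact isOpen_iInter_of_finite fun i => isOpen_Ioo.preimage ((continuous_apply i).comp (PiLp.continuous_ofLp 2 _))

lemma smul_mem_openBox (b : Fin 3 → ℝ) (hb : ∀ i, 0 < b i) {c : ℝ}
    (hc : c ∈ Set.Ioo (0:ℝ) 1) : c • ev b ∈ openBox b := by
  intro i
  have : (c • ev b) i = c * b i := by simp [ev]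
  rw [this]
  exact ⟨mul_pos hc.1 (hb i), mul_lt_of_lt_one_left (hb i) hc.2⟩

lemma tendsto_aux : Filter.Tendsto (fun n : ℕ => ((n : ℝ) + 2)⁻¹) Filter.atTop (nhds 0) := by
  apply tendsto_inv_atTop_zero.comp
  exact Filter.tendsto_atTop_add_const_right _ 2 tendsto_natCast_atTop_atTop

lemma inv_mem_Ioo (n : ℕ) : ((n : ℝ) + 2)⁻¹ ∈ Set.Ioo (0:ℝ) 1 := by
  constructor
  · positivity
  · rw [inv_lt_one_iff₀]; right; linarith [Nat.cast_nonneg (α := ℝ) n]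

lemma zero_mem_closure (b : Fin 3 → ℝ) (hb : ∀ i, 0 < b i) :
    (0 : E3) ∈ closure (openBox b) := by
  refine mem_closure_of_tendsto (f := fun n : ℕ => ((n : ℝ) + 2)⁻¹ • ev b)
    (by simpa using tendsto_aux.smul_const (ev b)) ?_
  exact Filter.Eventually.of_forall fun n => smul_mem_openBox b hb (inv_mem_Ioo n)

lemma diag_mem_closure (b : Fin 3 → ℝ) (hb : ∀ i, 0 < b i) :
    ev b ∈ closure (openBox b) := by
  have h : Filter.Tendsto (fun n : ℕ => (1 - ((n : ℝ) + 2)⁻¹) • ev b) Filter.atTop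
      (nhds (ev b)) := by
    have h1 : Filter.Tendsto (fun n : ℕ => 1 - ((n : ℝ) + 2)⁻¹) Filter.atTop (nhds 1) := by
      simpa using (tendsto_const_nhds (x := (1:ℝ))).sub tendsto_aux
    simpa using h1.smul_const (ev b)
  refine mem_closure_of_tendsto h ?_
  refine Filter.Eventually.of_forall fun n => smul_mem_openBox b hb ?_
  have := inv_mem_Ioo n
  exact ⟨by linarith [this.2], by linarith [this.1]⟩

/-- bond volume lemma for one bond volume.  Let `η ∈ ℤ³` with positive
entries, `ε > 0` and let `B = (0,εη₁) × (0,εη₂) × (0,εη₃)` be the bond volume with main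
diagonal from `0` to `εη`.  If `v` is continuous on `closure B` and piecewise linear with
respect to the type A decomposition of `B` into six tetrahedra (i.e. affine on each Kuhn
tetrahedron), then `∫_B ∇v·η dx = ε² η₁η₂η₃ (v(εη) − v(0))`. -/
theorem stmt2 (η : Fin 3 → ℤ) (hη : ∀ i, 0 < η i) (ε : ℝ) (hε : 0 < ε)
    (v : E3 → ℝ)
    (hcont : ContinuousOn v (closure (openBox (fun i => ε * (η i : ℝ)))))
    (hpl : ∀ σ : Equiv.Perm (Fin 3), ∃ (a : E3) (c : ℝ),
      ∀ x ∈ kuhnTet (fun i => ε * (η i : ℝ)) σ ∩ closure (openBox (fun i => ε * (η i : ℝ))),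
        v x = ⟪a, x⟫ + c) :
    ∫ x in openBox (fun i => ε * (η i : ℝ)), fderiv ℝ v x (ev fun i => (η i : ℝ)) ∂volume =
      ε ^ 2 * ((η 0 : ℝ) * (η 1 : ℝ) * (η 2 : ℝ)) *
        (v (ev fun i => ε * (η i : ℝ)) - v 0) := by
  set b : Fin 3 → ℝ := fun i => ε * (η i : ℝ) with hbdef
  have hb : ∀ i, 0 < b i := fun i => mul_pos hε (by exact_mod_cast hη i)
  choose a cc hac using hpl
  set c : ℝ := (v (ev b) - v 0) / ε with hcdef
  -- the endpoints belong to every tetrahedron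
  have h0tet : ∀ σ : Equiv.Perm (Fin 3), (0 : E3) ∈ kuhnTet b σ := by
    intro σ
    have h0 : ∀ i : Fin 3, (0 : E3) i = 0 := fun i => rfl
    simp [kuhnTet, h0]
  have hdtet : ∀ σ : Equiv.Perm (Fin 3), ev b ∈ kuhnTet b σ := by
    intro σ
    have h1 : ∀ i : Fin 3, (ev b) i / b i = 1 := fun i => by simp [ev, (hb i).ne']
    exact ⟨by rw [h1]; norm_num, by rw [h1, h1], by rw [h1, h1], by rw [h1]⟩
  -- the key identity: each `aσ` pairs with `η` to give `c`
  have hkey : ∀ σ : Equiv.Perm (Fin 3), ⟪a σ, ev fun i => (η i : ℝ)⟫ = c := by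
    intro σ
    have hvb := hac σ (ev b) ⟨hdtet σ, diag_mem_closure b hb⟩
    have hv0 := hac σ 0 ⟨h0tet σ, zero_mem_closure b hb⟩
    rw [inner_zero_right] at hv0
    have hsm : ev b = ε • (ev fun i => (η i : ℝ)) := by
      ext i; simp [ev, hbdef]
    have hinner : ⟪a σ, ev b⟫ = ε * ⟪a σ, ev fun i => (η i : ℝ)⟫ := by
      rw [hsm, real_inner_smul_right]
    rw [hcdef, hvb, hv0, hinner]
    field_simp
    ring
  -- pointwise identity for the derivative off the diagonal hyperplanes
  have hgrad : ∀ x ∈ openBox b, (∀ i j : Fin 3, i ≠ j → x i / b i ≠ x j / b j) →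
      fderiv ℝ v x (ev fun i => (η i : ℝ)) = c := by
    intro x hx hdist
    set r : Fin 3 → ℝ := fun i => x i / b i with hrdef
    set σ : Equiv.Perm (Fin 3) := Tuple.sort r with hσ
    have hmono : Monotone (r ∘ σ) := Tuple.monotone_sort r
    have h01 : r (σ 0) < r (σ 1) :=
      lt_of_le_of_ne (hmono (by decide : (0:Fin 3) ≤ 1))
        (hdist _ _ (σ.injective.ne (by decide)))
    have h12 : r (σ 1) < r (σ 2) :=
      lt_of_le_of_ne (hmono (by decide : (1:Fin 3) ≤ 2))
        (hdist _ _ (σ.injective.ne (by decide)))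
    set U : Set E3 := ({y : E3 | y (σ 0) / b (σ 0) < y (σ 1) / b (σ 1)} ∩
        {y : E3 | y (σ 1) / b (σ 1) < y (σ 2) / b (σ 2)}) ∩ openBox b with hUdef
    have hUopen : IsOpen U := by
      apply IsOpen.inter ?_ (openBox_isOpen b)
      have hcoord : ∀ k : Fin 3, Continuous fun y : E3 => y k / b k := fun k =>
        ((continuous_apply k).comp (PiLp.continuous_ofLp 2 _)).div_const _
      exact (isOpen_lt (hcoord (σ 0)) (hcoord (σ 1))).inter
        (isOpen_lt (hcoord (σ 1)) (hcoord (σ 2)))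
    have hxU : x ∈ U := ⟨⟨h01, h12⟩, hx⟩
    have hUsub : U ⊆ kuhnTet b σ ∩ closure (openBox b) := by
      rintro y ⟨⟨hy1, hy2⟩, hybox⟩
      refine ⟨⟨?_, le_of_lt hy1, le_of_lt hy2, ?_⟩, subset_closure hybox⟩
      · exact le_of_lt (div_pos (hybox (σ 0)).1 (hb (σ 0)))
      · exact le_of_lt ((div_lt_one (hb (σ 2))).2 (hybox (σ 2)).2)
    have heq : v =ᶠ[nhds x] fun y => ⟪a σ, y⟫ + cc σ := by
      filter_upwards [hUopen.mem_nhds hxU] with y hy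
      exact hac σ y (hUsub hy)
    have hfd : HasFDerivAt (fun y : E3 => ⟪a σ, y⟫ + cc σ) (innerSL ℝ (a σ)) x :=
      (innerSL ℝ (a σ)).hasFDerivAt.add_const (cc σ)
    rw [heq.fderiv_eq, hfd.fderiv]
    exact hkey σ
  -- the bad set is null
  have hNull : volume {x : E3 | ¬ ∀ i j : Fin 3, i ≠ j → x i / b i ≠ x j / b j} = 0 := by
    have hsub : {x : E3 | ¬ ∀ i j : Fin 3, i ≠ j → x i / b i ≠ x j / b j} ⊆
        ⋃ (i : Fin 3) (j : Fin 3) (_ : i ≠ j),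
          (LinearMap.ker ((innerSL ℝ (EuclideanSpace.single i (b i)⁻¹ -
            EuclideanSpace.single j (b j)⁻¹ : E3)).toLinearMap) : Set E3) := by
      intro x hx
      push_neg at hx
      obtain ⟨i, j, hij, hxij⟩ := hx
      refine Set.mem_iUnion.2 ⟨i, Set.mem_iUnion.2 ⟨j, Set.mem_iUnion.2 ⟨hij, ?_⟩⟩⟩
      simp only [SetLike.mem_coe, LinearMap.mem_ker, ContinuousLinearMap.coe_coe,
        innerSL_apply_apply, inner_sub_left, EuclideanSpace.inner_single_left]
      simp only [RCLike.star_def, starRingEnd_apply, star_trivial]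
      rw [div_eq_inv_mul, div_eq_inv_mul] at hxij
      rw [hxij]; ring
    refine measure_mono_null hsub ?_
    refine measure_iUnion_null fun i => measure_iUnion_null fun j => measure_iUnion_null fun hij => ?_
    apply Measure.addHaar_submodule
    intro htop
    have hw : (EuclideanSpace.single i (b i)⁻¹ - EuclideanSpace.single j (b j)⁻¹ : E3) ≠ 0 := by
      intro h0
      have := congrFun (congrArg (fun z : E3 => (z : Fin 3 → ℝ)) h0) i
      simp [EuclideanSpace.single_apply, hij, (hb i).ne'] at this
    have hmem : (EuclideanSpace.single i (b i)⁻¹ - EuclideanSpace.single j (b j)⁻¹ : E3) ∈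
        LinearMap.ker ((innerSL ℝ (EuclideanSpace.single i (b i)⁻¹ -
          EuclideanSpace.single j (b j)⁻¹ : E3)).toLinearMap) := htop ▸ Submodule.mem_top
    rw [LinearMap.mem_ker] at hmem
    simp only [ContinuousLinearMap.coe_coe, innerSL_apply_apply] at hmem
    exact hw (inner_self_eq_zero.1 hmem)
  -- a.e. equality on the box
  have hae : ∀ᵐ x ∂(volume.restrict (openBox b)),
      fderiv ℝ v x (ev fun i => (η i : ℝ)) = c := by
    rw [ae_restrict_iff' (openBox_isOpen b).measurableSet]
    rw [ae_iff]
    refine measure_mono_null ?_ hNull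
    intro x hx
    simp only [Set.mem_setOf_eq] at hx ⊢
    intro hdist
    exact hx fun hxbox => hgrad x hxbox hdist
  -- compute volume of the box
  have hvol : volume (openBox b) = ENNReal.ofReal (b 0) * ENNReal.ofReal (b 1) *
      ENNReal.ofReal (b 2) := by
    have hmp := EuclideanSpace.volume_preserving_symm_measurableEquiv_toLp (Fin 3)
    have hset : openBox b = (MeasurableEquiv.toLp 2 (Fin 3 → ℝ)).symm ⁻¹'
        (Set.univ.pi fun i => Set.Ioo 0 (b i)) := by
      ext x
      simp [openBox, Set.mem_pi]
    rw [hset, hmp.measure_preimage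
      (MeasurableSet.univ_pi fun i => measurableSet_Ioo).nullMeasurableSet]
    rw [volume_pi_pi]
    simp [Real.volume_Ioo, Fin.prod_univ_three]
  -- put everything together
  rw [integral_congr_ae hae, setIntegral_const, measureReal_def, hvol]
  rw [ENNReal.toReal_mul, ENNReal.toReal_mul, ENNReal.toReal_ofReal (hb 0).le,
    ENNReal.toReal_ofReal (hb 1).le, ENNReal.toReal_ofReal (hb 2).le]
  simp only [smul_eq_mul, hcdef, hbdef]
  field_simp
end
end

section
/- With the cell atomistic Cauchy–Born energy Φ^{a,CB}(y) = ε³ Σ_{ℓ∈𝔏} Σ_{η∈R} φ_η(∇̄y|_{K_ℓ} η), where ∇̄y|_{K_ℓ} is the matrix of averaged discrete derivatives on the cell K_ℓ, the energy is free of ghost forces: for the homogeneous deformation y_F(x) = Fx and every periodic continuous piecewise-trilinear test function v (equivalently every periodic lattice function), ⟨DΦ^{a,CB}(y_F), v⟩ = 0. -/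
open MeasureTheory

noncomputable section

/-- The `α`-th standard basis vector of ℝ³. -/
def e3 (α : Fin 3) : E3 := EuclideanSpace.single α 1

/-- The open lattice cell `K_ℓ`. -/
def cellOf (ε : ℝ) (ℓ : Fin 3 → ℤ) : Set E3 :=
  {x | ∀ i, x i ∈ Set.Ioo (ε * (ℓ i : ℝ)) (ε * ((ℓ i : ℝ) + 1))}

/-- The vertex of the cell `K_ℓ` selected by `s : Fin 3 → Bool`. -/
def cellVert (ε : ℝ) (ℓ : Fin 3 → ℤ) (s : Fin 3 → Bool) : E3 :=
  ev fun i => ε * ((ℓ i : ℝ) + if s i then 1 else 0)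

/-- The (vector-valued) averaged discrete derivative `D̄̄_{e_α} w_ℓ` on the cell `K_ℓ`:
the average over the four edges of `K_ℓ` parallel to `e_α` of the difference quotients. -/
def avgDiscrDerivV (ε : ℝ) (w : E3 → E3) (ℓ : Fin 3 → ℤ) (α : Fin 3) : E3 :=
  (1 / 4 : ℝ) • ∑ s ∈ Finset.univ.filter (fun s : Fin 3 → Bool => s α = false),
    (ε⁻¹) • (w (cellVert ε ℓ (Function.update s α true)) - w (cellVert ε ℓ s))

/-- The averaged discrete gradient `∇̄w|_{K_ℓ}` applied to the interaction vector
`η ∈ ℤ³`:  `∇̄w|_{K_ℓ} η = Σ_α η_α D̄̄_{e_α} w_ℓ`. -/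
def avgGradApply (ε : ℝ) (w : E3 → E3) (ℓ : Fin 3 → ℤ) (η : Fin 3 → ℤ) : E3 :=
  ∑ α : Fin 3, ((η α : ℝ)) • avgDiscrDerivV ε w ℓ α

/-- the cell atomistic Cauchy–Born energy is free of ghost forces.
For the homogeneous deformation `y_F(x) = Fx` and every periodic continuous piecewise
trilinear test function `v` on the scaled lattice `εℤ³` (`ε = 1/k`) over the periodic
domain, the first variation of `Φ^{a,CB}(y) = ε³ Σ_ℓ Σ_{η∈R} φ_η(∇̄y|_{K_ℓ} η)`
vanishes:  `ε³ Σ_ℓ Σ_{η∈R} φ_η′(∇̄y_F η)·(∇̄v η) = 0`. -/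
theorem stmt9 (k : ℕ) (hk : 0 < k) (ε : ℝ) (hε : ε = 1 / (k : ℝ))
    (R : Finset (Fin 3 → ℤ)) (φ : (Fin 3 → ℤ) → E3 → ℝ)
    (hφ : ∀ η ∈ R, ContDiff ℝ 1 (φ η))
    (F : Fin 3 → Fin 3 → ℝ)
    (yF : E3 → E3) (hyF : ∀ x, yF x = ev fun i => ∑ j, F i j * x j)
    (v : E3 → E3) (hcont : Continuous v)
    (hper : ∀ (x : E3) (i : Fin 3), v (x + e3 i) = v x)
    (c : (Fin 3 → ℤ) → (Fin 3 → Bool) → E3)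
    (hQ1 : ∀ (ℓ : Fin 3 → ℤ), ∀ x ∈ closure (cellOf ε ℓ),
      v x = ∑ s : Fin 3 → Bool, (∏ i, (if s i then x i else 1)) • c ℓ s) :
    ε ^ 3 * ∑ ℓ : Fin 3 → Fin k, ∑ η ∈ R,
        fderiv ℝ (φ η) (avgGradApply ε yF (fun i => (ℓ i : ℤ)) η)
          (avgGradApply ε v (fun i => (ℓ i : ℤ)) η) = 0 := by
  obtain ⟨n, rfl⟩ : ∃ n, k = n + 1 := ⟨k - 1, by omega⟩
  have hk0 : ((n + 1 : ℕ) : ℝ) ≠ 0 := by positivity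
  have hε0 : ε ≠ 0 := by rw [hε]; positivity
  have hεk : ε * ((n + 1 : ℕ) : ℝ) = 1 := by rw [hε]; field_simp
  -- The averaged derivative of the homogeneous deformation is independent of the cell.
  have hterm : ∀ (ℓ : Fin 3 → ℤ) (α : Fin 3) (s : Fin 3 → Bool), s α = false →
      (ε⁻¹) • (yF (cellVert ε ℓ (Function.update s α true)) - yF (cellVert ε ℓ s))
        = ev (fun i => F i α) := by
    intro ℓ α s hs
    ext i
    simp only [hyF, ev, cellVert, PiLp.toLp_apply, PiLp.smul_apply, PiLp.sub_apply, smul_eq_mul]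
    rw [← Finset.sum_sub_distrib, Finset.sum_eq_single α]
    · rw [Function.update_self, hs]
      field_simp
      simp
    · intro j _ hj
      rw [Function.update_of_ne hj]
      ring
    · simp
  have hAy : ∀ (ℓ : Fin 3 → ℤ) (α : Fin 3),
      avgDiscrDerivV ε yF ℓ α = avgDiscrDerivV ε yF (fun _ => 0) α := by
    intro ℓ α
    unfold avgDiscrDerivV
    refine congrArg _ ?_
    refine Finset.sum_congr rfl ?_
    intro s hs
    have hs' : s α = false := (Finset.mem_filter.mp hs).2
    rw [hterm ℓ α s hs', hterm (fun _ => 0) α s hs']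
  -- Telescoping: the sum over all cells of the averaged derivative of v vanishes.
  have hshift : ∀ (s : Fin 3 → Bool) (m : Fin 3 → ℤ) (β : Fin 3),
      v (cellVert ε (Function.update m β (m β + (n + 1 : ℕ))) s) = v (cellVert ε m s) := by
    intro s m β
    have hc : cellVert ε (Function.update m β (m β + (n + 1 : ℕ))) s
        = cellVert ε m s + e3 β := by
      ext i
      simp only [cellVert, ev, e3, PiLp.toLp_apply, PiLp.add_apply, EuclideanSpace.single_apply]
      by_cases h : i = β
      · subst h
        simp only [Function.update_self, if_pos rfl]
        push_cast at hεk ⊢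
        linear_combination hεk
      · simp [Function.update_of_ne h, h]
    rw [hc, hper]
  have htele : ∀ (s : Fin 3 → Bool) (α : Fin 3),
      ∑ ℓ : Fin 3 → Fin (n + 1),
          v (cellVert ε (fun i => (ℓ i : ℤ) + if i = α then 1 else 0) s)
        = ∑ ℓ : Fin 3 → Fin (n + 1), v (cellVert ε (fun i => (ℓ i : ℤ)) s) := by
    intro s α
    set σ : (Fin 3 → Fin (n + 1)) ≃ (Fin 3 → Fin (n + 1)) :=
      Equiv.piCongrRight (fun i => if i = α then Equiv.addRight (1 : Fin (n + 1))
        else Equiv.refl _) with hσ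
    refine Fintype.sum_equiv σ _ _ ?_
    intro ℓ
    have hσap : ∀ i, σ ℓ i = if i = α then ℓ i + 1 else ℓ i := by
      intro i
      simp only [hσ, Equiv.piCongrRight_apply, Pi.map_apply]
      split <;> simp [Equiv.addRight]
    by_cases hlast : ℓ α = Fin.last n
    · have h0 : σ ℓ α = 0 := by rw [hσap, if_pos rfl, hlast, Fin.last_add_one]
      have harg : (fun i => ((ℓ i : ℤ) + if i = α then 1 else 0))
          = Function.update (fun i => ((σ ℓ i : ℤ))) α (((σ ℓ α : ℤ)) + (n + 1 : ℕ)) := by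
        funext i
        by_cases h : i = α
        · subst h
          rw [Function.update_self, h0, if_pos rfl, hlast]
          simp [Fin.last]
        · rw [Function.update_of_ne h, if_neg h, hσap, if_neg h]
          simp
      rw [harg, hshift]
    · have harg : (fun i => ((ℓ i : ℤ) + if i = α then 1 else 0))
          = fun i => ((σ ℓ i : ℤ)) := by
        funext i
        by_cases h : i = α
        · subst h
          rw [if_pos rfl, hσap, if_pos rfl]
          have hv : (ℓ i + 1 : Fin (n + 1)).val = (ℓ i).val + 1 := by
            rw [Fin.val_add_one]
            simp [hlast]
          rw [Int.ofNat_inj.mpr hv]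
          push_cast
          ring
        · rw [if_neg h, hσap, if_neg h]
          simp
      rw [harg]
  have hvert : ∀ (ℓ : Fin 3 → ℤ) (α : Fin 3) (s : Fin 3 → Bool), s α = false →
      cellVert ε ℓ (Function.update s α true)
        = cellVert ε (fun i => ℓ i + if i = α then 1 else 0) s := by
    intro ℓ α s hs
    ext i
    simp only [cellVert, ev, PiLp.toLp_apply]
    by_cases h : i = α
    · subst h
      rw [Function.update_self, hs]
      push_cast
      ring_nf
    · rw [Function.update_of_ne h, if_neg h]
      simp
  have hSum : ∀ α : Fin 3,
      ∑ ℓ : Fin 3 → Fin (n + 1), avgDiscrDerivV ε v (fun i => (ℓ i : ℤ)) α = 0 := by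
    intro α
    unfold avgDiscrDerivV
    rw [← Finset.smul_sum, Finset.sum_comm]
    rw [show (0 : E3) = (1 / 4 : ℝ) • (0 : E3) by simp]
    congr 1
    refine Finset.sum_eq_zero ?_
    intro s hs
    have hs' : s α = false := (Finset.mem_filter.mp hs).2
    rw [← Finset.smul_sum, Finset.sum_sub_distrib]
    have h1 : ∑ ℓ : Fin 3 → Fin (n + 1),
        v (cellVert ε (fun i => ((ℓ i : ℤ))) (Function.update s α true))
      = ∑ ℓ : Fin 3 → Fin (n + 1), v (cellVert ε (fun i => ((ℓ i : ℤ))) s) := by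
      calc ∑ ℓ : Fin 3 → Fin (n + 1),
            v (cellVert ε (fun i => ((ℓ i : ℤ))) (Function.update s α true))
          = ∑ ℓ : Fin 3 → Fin (n + 1),
            v (cellVert ε (fun i => (ℓ i : ℤ) + if i = α then 1 else 0) s) := by
            refine Finset.sum_congr rfl ?_
            intro ℓ _
            rw [hvert _ α s hs']
        _ = _ := htele s α
    rw [h1, sub_self, smul_zero]
  -- Assemble.
  have hGv : ∀ η, ∑ ℓ : Fin 3 → Fin (n + 1),
      avgGradApply ε v (fun i => (ℓ i : ℤ)) η = 0 := by
    intro η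
    unfold avgGradApply
    rw [Finset.sum_comm]
    refine Finset.sum_eq_zero ?_
    intro α _
    rw [← Finset.smul_sum, hSum α, smul_zero]
  have h0 : ∑ ℓ : Fin 3 → Fin (n + 1), ∑ η ∈ R,
      fderiv ℝ (φ η) (avgGradApply ε yF (fun i => (ℓ i : ℤ)) η)
        (avgGradApply ε v (fun i => (ℓ i : ℤ)) η) = 0 := by
    rw [Finset.sum_comm]
    refine Finset.sum_eq_zero ?_
    intro η _
    have hGd : ∀ ℓ : Fin 3 → Fin (n + 1),
        avgGradApply ε yF (fun i => (ℓ i : ℤ)) η = avgGradApply ε yF (fun _ => 0) η := by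
      intro ℓ
      unfold avgGradApply
      refine Finset.sum_congr rfl ?_
      intro α _
      rw [hAy]
    calc ∑ ℓ : Fin 3 → Fin (n + 1),
          fderiv ℝ (φ η) (avgGradApply ε yF (fun i => (ℓ i : ℤ)) η)
            (avgGradApply ε v (fun i => (ℓ i : ℤ)) η)
        = ∑ ℓ : Fin 3 → Fin (n + 1),
          fderiv ℝ (φ η) (avgGradApply ε yF (fun _ => 0) η)
            (avgGradApply ε v (fun i => (ℓ i : ℤ)) η) := by
          refine Finset.sum_congr rfl ?_
          intro ℓ _
          rw [hGd]
      _ = fderiv ℝ (φ η) (avgGradApply ε yF (fun _ => 0) η)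
            (∑ ℓ : Fin 3 → Fin (n + 1), avgGradApply ε v (fun i => (ℓ i : ℤ)) η) := by
          rw [map_sum]
      _ = 0 := by rw [hGv, map_zero]
  rw [h0, mul_zero]
end
end
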